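/- Let H be a Hopf k-algebra, A a quasi partial H-comodule algebra, B → A^{coH} a ring morphism, and suppose A/B is a partial Hopf-Galois extension (i.e. the canonical map can : A ⊗_B A → A•H, a ⊗ a' ↦ (a•1_H)ρ_A(a'), is bijective). Then the functor − ⊗_B A : Mod_B → PMod_A^H is fully faithful if and only if ι : B → A is pure as a left B-module morphism; and in that case B ≅ A^{coH}. -/

import Mathlib

open TensorProduct

universe u

section Defs

variable (k : Type u) [Field k]

/-- The map `X ⊗ ε : X ⊗ H → X` (composed with `X ⊗ k ≅ X`). -/
noncomputable def epsMap (X H : Type u) [AddCommGroup H] [Module k H] [Coalgebra k H]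
    [AddCommGroup X] [Module k X] : X ⊗[k] H →ₗ[k] X :=
  (TensorProduct.rid k X).toLinearMap ∘ₗ
    LinearMap.lTensor X (Coalgebra.counit : H →ₗ[k] k)

/-- The map `X ⊗ Δ` followed by reassociation, `X ⊗ H → (X ⊗ H) ⊗ H`. -/
noncomputable def deltaMap (X H : Type u) [AddCommGroup H] [Module k H] [Coalgebra k H]
    [AddCommGroup X] [Module k X] : X ⊗[k] H →ₗ[k] (X ⊗[k] H) ⊗[k] H :=
  (TensorProduct.assoc k X H H).symm.toLinearMap ∘ₗ
    LinearMap.lTensor X (Coalgebra.comul : H →ₗ[k] H ⊗[k] H)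

/-- `(X, X•H, π, ρ)` is a quasi partial `H`-comodule: `π` is surjective, [QPC1]
counitality holds (via the induced map `X•ε`), and [QPC2] coassociativity holds in
the coassociativity pushout `Θ = ((X•H) ⊗ H)/(K + L)`. -/
noncomputable def IsQuasiPartialComodule {X XbH H : Type u}
    [AddCommGroup H] [Module k H] [Coalgebra k H]
    [AddCommGroup X] [Module k X] [AddCommGroup XbH] [Module k XbH]
    (π : X ⊗[k] H →ₗ[k] XbH) (ρ : X →ₗ[k] XbH) : Prop :=
  Function.Surjective π ∧
  (∃ c : XbH →ₗ[k] X, c ∘ₗ π = epsMap k X H ∧ c ∘ₗ ρ = LinearMap.id) ∧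
  (∀ (x : X) (u : X ⊗[k] H), π u = ρ x →
    TensorProduct.map ρ (LinearMap.id : H →ₗ[k] H) u -
      TensorProduct.map π (LinearMap.id : H →ₗ[k] H) (deltaMap k X H u) ∈
    Submodule.map (TensorProduct.map ρ (LinearMap.id : H →ₗ[k] H)) (LinearMap.ker π) ⊔
    Submodule.map (TensorProduct.map π (LinearMap.id : H →ₗ[k] H) ∘ₗ deltaMap k X H)
      (LinearMap.ker π))

variable {H A M : Type u} [Ring H] [HopfAlgebra k H]
  [AddCommGroup M] [Module k M] [Ring A] [Algebra k A]

/-- The right `A`-action on `M` as a map `M ⊗ A → M`. -/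
noncomputable def actLin (actM : M →ₗ[k] A →ₗ[k] M) : M ⊗[k] A →ₗ[k] M :=
  TensorProduct.lift actM

/-- The `A ⊗ H`-action on `M ⊗ H`: `(m ⊗ h)·(a ⊗ h') = ma ⊗ hh'`. -/
noncomputable def muMH (actM : M →ₗ[k] A →ₗ[k] M) :
    (M ⊗[k] H) ⊗[k] (A ⊗[k] H) →ₗ[k] M ⊗[k] H :=
  TensorProduct.map (actLin k actM) (LinearMap.mul' k H) ∘ₗ
    (TensorProduct.tensorTensorTensorComm k M H A H).toLinearMap

/-- The map `M ⊗ (A ⊗ H) → M ⊗ H`, `m ⊗ (a ⊗ h) ↦ ma ⊗ h`. -/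
noncomputable def act2 (actM : M →ₗ[k] A →ₗ[k] M) :
    M ⊗[k] (A ⊗[k] H) →ₗ[k] M ⊗[k] H :=
  TensorProduct.map (actLin k actM) (LinearMap.id : H →ₗ[k] H) ∘ₗ
    (TensorProduct.assoc k M A H).symm.toLinearMap

end Defs

/-- Let `A` be a quasi partial `H`-comodule algebra, `B → A^{coH}` a ring morphism,
and suppose `A/B` is a partial Hopf–Galois extension, i.e. the canonical map
`can : A ⊗_B A → A•H`, `a ⊗ a' ↦ (a•1_H)·ρ_A(a')`, is bijective. Then the functor
`− ⊗_B A : Mod_B → PMod_A^H` is fully faithful (equivalently, by the adjunction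
`− ⊗_B A ⊣ (−)^{coH}`, the unit `ν_N : N → (N ⊗_B A)^{coH}`, `n ↦ n ⊗ 1_A`, is
bijective for every `B`-module `N`) if and only if `ι : B → A` is pure as a
left `B`-module morphism; and in that case `B ≅ A^{coH}`. -/
theorem galois_fullyFaithful_iff_pure
    {k H A AbH : Type u} [Field k] [Ring H] [HopfAlgebra k H]
    [Ring A] [Algebra k A] [AddCommGroup AbH] [Module k AbH]
    {B : Type u} [CommRing B] [Algebra k B] [Algebra B A] [IsScalarTower k B A]
    [Module B AbH]
    (πA : A ⊗[k] H →ₗ[k] AbH) (ρA : A →ₗ[k] AbH)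
    (hA : IsQuasiPartialComodule k πA ρA)
    -- `A` is a quasi partial `H`-comodule algebra:
    (mulAbH : AbH →ₗ[k] AbH →ₗ[k] AbH)
    (hmul : ∀ (a a' : A) (h h' : H),
      mulAbH (πA (a ⊗ₜ h)) (πA (a' ⊗ₜ h')) = πA ((a * a') ⊗ₜ (h * h')))
    (hone : ρA 1 = πA (1 ⊗ₜ 1))
    (hρmul : ∀ a a' : A, ρA (a * a') = mulAbH (ρA a) (ρA a'))
    -- `B → A` lands in the coinvariants `A^{coH}`:
    (hB : ∀ b : B, ρA (algebraMap B A b) = πA (algebraMap B A b ⊗ₜ 1))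
    -- `B`-linear incarnations of `ρ_A` and of `a ↦ π_A(a ⊗ 1_H)`:
    (ρA' : A →ₗ[B] AbH) (hρA' : ∀ a : A, ρA' a = ρA a)
    (πA1 : A →ₗ[B] AbH) (hπA1 : ∀ a : A, πA1 a = πA (a ⊗ₜ 1))
    -- `A/B` is a partial `H`-Galois extension:
    (can : A ⊗[B] A →ₗ[B] AbH)
    (hcan : ∀ a a' : A, can (a ⊗ₜ a') = mulAbH (πA (a ⊗ₜ 1)) (ρA a'))
    (hGalois : Function.Bijective can) :
    -- purity of `ι : B → A` ⟺ `− ⊗_B A` fully faithful (unit bijective on coinvariants)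
    ((∀ (P : Type u) [AddCommGroup P] [Module B P],
        Function.Injective (fun p : P => (p ⊗ₜ[B] (1 : A) : P ⊗[B] A))) ↔
      (∀ (N : Type u) [AddCommGroup N] [Module B N],
        Set.BijOn (fun n : N => (n ⊗ₜ[B] (1 : A) : N ⊗[B] A)) Set.univ
          {ξ : N ⊗[B] A |
            LinearMap.lTensor N ρA' ξ = LinearMap.lTensor N πA1 ξ})) ∧
    -- and purity implies `B ≅ A^{coH}`
    ((∀ (P : Type u) [AddCommGroup P] [Module B P],
        Function.Injective (fun p : P => (p ⊗ₜ[B] (1 : A) : P ⊗[B] A))) →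
      Set.BijOn (algebraMap B A) Set.univ
        {a : A | ρA a = πA (a ⊗ₜ 1)}) := by
  classical
  have can_a1 : ∀ a : A, can (a ⊗ₜ 1) = πA (a ⊗ₜ 1) := by
    intro a
    rw [hcan, hone, hmul, mul_one, mul_one]
  have can_1a : ∀ a : A, can ((1 : A) ⊗ₜ a) = ρA a := by
    intro a
    rw [hcan, ← hone, ← hρmul, one_mul]
  have canInj := hGalois.injective
  let e : (A ⊗[B] A) ≃ₗ[B] AbH := LinearEquiv.ofBijective can hGalois
  -- purity implies surjectivity of the unit on coinvariants
  have main : (∀ (P : Type u) [AddCommGroup P] [Module B P],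
        Function.Injective (fun p : P => (p ⊗ₜ[B] (1 : A) : P ⊗[B] A))) →
      ∀ (N : Type u) [AddCommGroup N] [Module B N] (ξ : N ⊗[B] A),
        LinearMap.lTensor N ρA' ξ = LinearMap.lTensor N πA1 ξ →
        ∃ n : N, n ⊗ₜ[B] (1 : A) = ξ := by
    intro pure N _ _ ξ hξ
    set r : A →ₗ[B] A ⊗[B] A := (TensorProduct.mk B A A).flip 1 with hr
    set l : A →ₗ[B] A ⊗[B] A := TensorProduct.mk B A A 1 with hl
    have hcr : can ∘ₗ r = πA1 := by
      apply LinearMap.ext; intro a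
      simp only [hr, LinearMap.comp_apply, LinearMap.flip_apply, TensorProduct.mk_apply]
      rw [can_a1, hπA1]
    have hcl : can ∘ₗ l = ρA' := by
      apply LinearMap.ext; intro a
      simp only [hl, LinearMap.comp_apply, TensorProduct.mk_apply]
      rw [can_1a, hρA']
    have hinj : Function.Injective (LinearMap.lTensor N can) := by
      have h0 : e.symm.toLinearMap ∘ₗ can = LinearMap.id := by
        apply LinearMap.ext; intro x
        exact e.symm_apply_apply x
      intro x y hxy
      have h1 := congrArg (LinearMap.lTensor N e.symm.toLinearMap) hxy
      rwa [← LinearMap.lTensor_comp_apply, ← LinearMap.lTensor_comp_apply, h0,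
        LinearMap.lTensor_id, LinearMap.id_apply, LinearMap.id_apply] at h1
    have hrl : LinearMap.lTensor N r ξ = LinearMap.lTensor N l ξ := by
      apply hinj
      rw [← LinearMap.lTensor_comp_apply, ← LinearMap.lTensor_comp_apply, hcr, hcl]
      exact hξ.symm
    set ν : N →ₗ[B] N ⊗[B] A := (TensorProduct.mk B N A).flip 1 with hν
    set Q := (N ⊗[B] A) ⧸ LinearMap.range ν with hQ
    set q : (N ⊗[B] A) →ₗ[B] Q := (LinearMap.range ν).mkQ with hq
    set φ : N ⊗[B] (A ⊗[B] A) →ₗ[B] Q ⊗[B] A :=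
      LinearMap.rTensor A q ∘ₗ (TensorProduct.assoc B N A A).symm.toLinearMap with hφ
    have hφr : φ ∘ₗ LinearMap.lTensor N r = ((TensorProduct.mk B Q A).flip 1) ∘ₗ q := by
      apply TensorProduct.ext'
      intro n a
      simp [hφ, hr, TensorProduct.assoc_symm_tmul]
    have hφl : φ ∘ₗ LinearMap.lTensor N l = 0 := by
      apply TensorProduct.ext'
      intro n a
      have hq1 : q (n ⊗ₜ (1 : A)) = 0 := by
        rw [hq, Submodule.mkQ_apply, Submodule.Quotient.mk_eq_zero]
        exact ⟨n, rfl⟩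
      simp [hφ, hl, TensorProduct.assoc_symm_tmul, hq1]
    have h2 : q ξ ⊗ₜ[B] (1 : A) = 0 := by
      have e1 : φ (LinearMap.lTensor N r ξ) = q ξ ⊗ₜ[B] (1 : A) := by
        have := LinearMap.congr_fun hφr ξ
        simpa using this
      have e2 : φ (LinearMap.lTensor N l ξ) = 0 := by
        have := LinearMap.congr_fun hφl ξ
        simpa using this
      rw [← e1, hrl, e2]
    have h3 : q ξ = 0 := by
      apply pure Q
      show q ξ ⊗ₜ[B] (1 : A) = (0 : Q) ⊗ₜ[B] (1 : A)
      rw [h2, TensorProduct.zero_tmul]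
    rw [hq, Submodule.mkQ_apply, Submodule.Quotient.mk_eq_zero] at h3
    obtain ⟨n, hn⟩ := h3
    exact ⟨n, hn⟩
  constructor
  · constructor
    · intro pure N _ _
      refine ⟨fun n _ => ?_, fun x _ y _ h => pure N h, fun ξ hξ => ?_⟩
      · show LinearMap.lTensor N ρA' (n ⊗ₜ 1) = LinearMap.lTensor N πA1 (n ⊗ₜ 1)
        rw [LinearMap.lTensor_tmul, LinearMap.lTensor_tmul, hρA', hπA1, hone]
      · obtain ⟨n, hn⟩ := main pure N ξ hξ
        exact ⟨n, trivial, hn⟩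
    · intro hF P _ _
      exact Set.injOn_univ.mp (hF P).injOn
  · intro pure
    refine ⟨fun b _ => hB b, fun b _ b' _ h => ?_, fun a ha => ?_⟩
    · apply pure B
      show b ⊗ₜ[B] (1 : A) = b' ⊗ₜ[B] (1 : A)
      calc b ⊗ₜ[B] (1 : A) = (b • (1 : B)) ⊗ₜ[B] (1 : A) := by
            rw [smul_eq_mul, mul_one]
        _ = (1 : B) ⊗ₜ[B] (b • (1 : A)) := TensorProduct.smul_tmul b 1 1
        _ = (1 : B) ⊗ₜ[B] (algebraMap B A b) := by rw [Algebra.algebraMap_eq_smul_one]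
        _ = (1 : B) ⊗ₜ[B] (algebraMap B A b') := by rw [h]
        _ = (1 : B) ⊗ₜ[B] (b' • (1 : A)) := by rw [Algebra.algebraMap_eq_smul_one]
        _ = (b' • (1 : B)) ⊗ₜ[B] (1 : A) := (TensorProduct.smul_tmul b' 1 1).symm
        _ = b' ⊗ₜ[B] (1 : A) := by rw [smul_eq_mul, mul_one]
    · have h1 : can (a ⊗ₜ 1) = can ((1 : A) ⊗ₜ a) := by
        rw [can_a1, can_1a]; exact ha.symm
      have h2 : a ⊗ₜ[B] (1 : A) = (1 : A) ⊗ₜ[B] a := canInj h1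
      set ι : B →ₗ[B] A := Algebra.linearMap B A with hι
      set Q := A ⧸ LinearMap.range ι with hQ
      set q : A →ₗ[B] Q := (LinearMap.range ι).mkQ with hq
      have h3 : q a ⊗ₜ[B] (1 : A) = q 1 ⊗ₜ[B] a := by
        have := congrArg (LinearMap.rTensor A q) h2
        simpa using this
      have hq1 : q (1 : A) = 0 := by
        rw [hq, Submodule.mkQ_apply, Submodule.Quotient.mk_eq_zero]
        exact ⟨1, by simp [hι]⟩
      have h4 : q a = 0 := by
        apply pure Q
        show q a ⊗ₜ[B] (1 : A) = (0 : Q) ⊗ₜ[B] (1 : A)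
        rw [h3, hq1, TensorProduct.zero_tmul, TensorProduct.zero_tmul]
      rw [hq, Submodule.mkQ_apply, Submodule.Quotient.mk_eq_zero] at h4
      obtain ⟨b, hb⟩ := h4
      exact ⟨b, trivial, hb⟩
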